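/- Let ω ≠ 0 and let M_c, M_s : ℝ → ℝ be functions with M_c(T)/T → I_c and M_s(T)/T → I_s as T → +∞, where (I_c, I_s) ≠ (0, 0). Then the function t ↦ sin(ωt) M_c(t) − cos(ωt) M_s(t) is unbounded on [0, ∞). -/

import Mathlib

open Filter

/-- If the linear growth rates `I_c`, `I_s` of `M_c`, `M_s` do not both vanish, then
`t ↦ sin(ωt) M_c(t) - cos(ωt) M_s(t)` is unbounded on `[0, ∞)`. -/
theorem unbounded_of_nonzero_growth_rates
    (ω : ℝ) (hω : ω ≠ 0) (Mc Ms : ℝ → ℝ) (Ic Is : ℝ)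
    (hc : Tendsto (fun T : ℝ => Mc T / T) atTop (nhds Ic))
    (hs : Tendsto (fun T : ℝ => Ms T / T) atTop (nhds Is))
    (hne : (Ic, Is) ≠ (0, 0)) :
    ¬ ∃ C : ℝ, ∀ t ∈ Set.Ici (0:ℝ),
        |Real.sin (ω * t) * Mc t - Real.cos (ω * t) * Ms t| ≤ C := by
  rintro ⟨C, hC⟩
  -- set up the phase `a` with cos a = -Is/r, sin a = Ic/r
  set z : ℂ := ⟨-Is, Ic⟩ with hz_def
  have hz : z ≠ 0 := by
    intro h0
    apply hne
    rw [Complex.ext_iff] at h0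
    simp only [hz_def, Complex.zero_re, Complex.zero_im, neg_eq_zero] at h0
    simp [Prod.ext_iff, h0.1, h0.2]
  set r : ℝ := ‖z‖ with hr_def
  have hr : 0 < r := norm_pos_iff.mpr hz
  set a : ℝ := Complex.arg z with ha_def
  have hcos : Real.cos a = -Is / r := by
    rw [ha_def, Complex.cos_arg hz]
  have hsin : Real.sin a = Ic / r := by
    rw [ha_def, Complex.sin_arg]
  set L : ℝ := Real.sin a * Ic - Real.cos a * Is with hL_def
  have hIcIs : 0 < Ic ^ 2 + Is ^ 2 := by
    rcases (by simpa [Prod.ext_iff] using hne : ¬ (Ic = 0 ∧ Is = 0)) with h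
    rcases eq_or_ne Ic 0 with h1 | h1
    · have h2 : Is ≠ 0 := fun h2 => h ⟨h1, h2⟩
      positivity
    · positivity
  have hL : 0 < L := by
    rw [hL_def, hsin, hcos]
    have : Ic / r * Ic - -Is / r * Is = (Ic ^ 2 + Is ^ 2) / r := by ring
    rw [this]
    positivity
  -- the sequence of times
  set k : ℕ → ℤ := fun n => if 0 < ω then (n : ℤ) else -(n : ℤ) with hk_def
  set u : ℕ → ℝ := fun n => (a + (k n : ℝ) * (2 * Real.pi)) / ω with hu_def
  have hωu : ∀ n, ω * u n = a + (k n : ℝ) * (2 * Real.pi) := by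
    intro n; rw [hu_def]; field_simp
  have hsin' : ∀ n, Real.sin (ω * u n) = Real.sin a := by
    intro n; rw [hωu n, Real.sin_add_int_mul_two_pi]
  have hcos' : ∀ n, Real.cos (ω * u n) = Real.cos a := by
    intro n; rw [hωu n, Real.cos_add_int_mul_two_pi]
  have hu' : ∀ n, u n = a / ω + (n : ℝ) * (2 * Real.pi / |ω|) := by
    intro n
    simp only [hu_def, hk_def]
    split_ifs with h
    · rw [abs_of_pos h]
      push_cast
      ring
    · rw [abs_of_neg (lt_of_le_of_ne (not_lt.mp h) hω), div_neg]
      push_cast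
      ring
  have hu : Tendsto u atTop atTop := by
    have hpos : 0 < 2 * Real.pi / |ω| := by
      have := Real.pi_pos
      have : 0 < |ω| := abs_pos.mpr hω
      positivity
    have h1 : Tendsto (fun n : ℕ => (n : ℝ) * (2 * Real.pi / |ω|)) atTop atTop :=
      Tendsto.atTop_mul_const hpos tendsto_natCast_atTop_atTop
    have h2 := tendsto_atTop_add_const_left atTop (a / ω) h1
    refine h2.congr fun n => (hu' n).symm
  -- the two limits
  have h1 : Tendsto (fun n => Mc (u n) / u n) atTop (nhds Ic) := hc.comp hu
  have h2 : Tendsto (fun n => Ms (u n) / u n) atTop (nhds Is) := hs.comp hu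
  have h3 : Tendsto (fun n =>
      (Real.sin (ω * u n) * Mc (u n) - Real.cos (ω * u n) * Ms (u n)) / u n)
      atTop (nhds L) := by
    have := (h1.const_mul (Real.sin a)).sub (h2.const_mul (Real.cos a))
    refine this.congr fun n => ?_
    rw [hsin' n, hcos' n]
    ring
  have h0 : Tendsto (fun n =>
      (Real.sin (ω * u n) * Mc (u n) - Real.cos (ω * u n) * Ms (u n)) / u n)
      atTop (nhds 0) := by
    have hCu : Tendsto (fun n => C / u n) atTop (nhds 0) :=
      tendsto_const_nhds.div_atTop hu
    refine squeeze_zero_norm' ?_ hCu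
    filter_upwards [hu.eventually_ge_atTop 1] with n hn
    have hn0 : 0 < u n := lt_of_lt_of_le one_pos hn
    have hb := hC (u n) (le_of_lt hn0)
    rw [Real.norm_eq_abs, abs_div, abs_of_pos hn0]
    exact div_le_div_of_nonneg_right hb hn0.le
  have := tendsto_nhds_unique h3 h0
  exact absurd this (ne_of_gt hL)
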